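/- Let E be a real Banach space and x, y ∈ E with ‖x‖ = ‖y‖ = 1. Then there exists a functional f ∈ E* with ‖f‖ = 1 such that |f(x)| ≥ 1/5 and |f(y)| ≥ 1/5. -/

import Mathlib

/-- For any two norm-one vectors `x, y` of a real Banach space there is a norm-one
functional `f` with `|f(x)| ≥ 1/5` and `|f(y)| ≥ 1/5`. -/
theorem exists_functional_both_large {V : Type*} [NormedAddCommGroup V] [NormedSpace ℝ V]
    (x y : V) (hx : ‖x‖ = 1) (hy : ‖y‖ = 1) :
    ∃ f : V →L[ℝ] ℝ, ‖f‖ = 1 ∧ 1 / 5 ≤ |f x| ∧ 1 / 5 ≤ |f y| := by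
  have hx0 : x ≠ 0 := by intro h; simp [h] at hx
  have hy0 : y ≠ 0 := by intro h; simp [h] at hy
  obtain ⟨f, hf1, hfx⟩ := exists_dual_vector ℝ x (norm_ne_zero_iff.mpr hx0)
  obtain ⟨g, hg1, hgy⟩ := exists_dual_vector ℝ y (norm_ne_zero_iff.mpr hy0)
  rw [hx] at hfx; rw [hy] at hgy
  norm_cast at hfx hgy
  by_cases h1 : 1 / 5 ≤ |f y|
  · exact ⟨f, hf1, by rw [hfx]; norm_num, h1⟩
  by_cases h2 : 1 / 5 ≤ |g x|
  · exact ⟨g, hg1, h2, by rw [hgy]; norm_num⟩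
  push_neg at h1 h2
  have hfgx : 4 / 5 < (f + g) x := by
    have := abs_lt.mp h2
    simp only [ContinuousLinearMap.add_apply, hfx]
    linarith [this.1]
  have hfgy : 4 / 5 < (f + g) y := by
    have := abs_lt.mp h1
    simp only [ContinuousLinearMap.add_apply, hgy]
    linarith [this.1]
  have hne : f + g ≠ 0 := by
    intro h
    rw [h] at hfgx
    simp at hfgx
    linarith
  have hnpos : 0 < ‖f + g‖ := norm_pos_iff.mpr hne
  have hnle : ‖f + g‖ ≤ 2 := by
    calc ‖f + g‖ ≤ ‖f‖ + ‖g‖ := norm_add_le _ _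
    _ = 2 := by rw [hf1, hg1]; norm_num
  refine ⟨‖f + g‖⁻¹ • (f + g), ?_, ?_, ?_⟩
  · rw [norm_smul ‖f + g‖⁻¹ (f + g), norm_inv, norm_norm, inv_mul_cancel₀ (ne_of_gt hnpos)]
  · have : (1/5 : ℝ) ≤ ‖f + g‖⁻¹ * ((f + g) x) := by
      have h2' : (2:ℝ)⁻¹ ≤ ‖f + g‖⁻¹ := by
        apply inv_anti₀ hnpos hnle
      calc (1/5 : ℝ) ≤ 2⁻¹ * (4/5) := by norm_num
      _ ≤ ‖f + g‖⁻¹ * ((f + g) x) := by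
          apply mul_le_mul h2' (le_of_lt hfgx) (by norm_num) (le_of_lt (inv_pos.mpr hnpos))
    simpa [mul_add] using this.trans (le_abs_self _)
  · have : (1/5 : ℝ) ≤ ‖f + g‖⁻¹ * ((f + g) y) := by
      have h2' : (2:ℝ)⁻¹ ≤ ‖f + g‖⁻¹ := by
        apply inv_anti₀ hnpos hnle
      calc (1/5 : ℝ) ≤ 2⁻¹ * (4/5) := by norm_num
      _ ≤ ‖f + g‖⁻¹ * ((f + g) y) := by
          apply mul_le_mul h2' (le_of_lt hfgy) (by norm_num) (le_of_lt (inv_pos.mpr hnpos))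
    simpa [mul_add] using this.trans (le_abs_self _)
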